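/- The Demazure operators on Pol_n satisfy the braid relation ∂_r ∂_{r+1} ∂_r = ∂_{r+1} ∂_r ∂_{r+1} for all 1 ≤ r ≤ n-2, and the commutation relation ∂_r ∂_t = ∂_t ∂_r whenever |r - t| > 1. -/

import Mathlib

open MvPolynomial

private lemma X_sub_X_ne {k : Type} [Field k] {n : ℕ} {i j : Fin n} (h : i ≠ j) :
    (X i - X j : MvPolynomial (Fin n) k) ≠ 0 := fun h0 =>
  h (MvPolynomial.X_injective (sub_eq_zero.mp h0))

private lemma swap_inv {k : Type} [Field k] {n : ℕ} {i j : Fin n} (hij : i ≠ j)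
    {P Q : MvPolynomial (Fin n) k}
    (h : (X i - X j) * Q = P - rename (⇑(Equiv.swap i j)) P) :
    rename (⇑(Equiv.swap i j)) Q = Q := by
  have h2 := congrArg (rename (⇑(Equiv.swap i j))) h
  simp only [map_mul, map_sub, rename_X, Equiv.swap_apply_left, Equiv.swap_apply_right,
    rename_rename] at h2
  rw [show (⇑(Equiv.swap i j)) ∘ (⇑(Equiv.swap i j)) = id from
    funext fun x => Equiv.swap_apply_self i j x, rename_id, AlgHom.id_apply] at h2
  exact mul_left_cancel₀ (X_sub_X_ne hij) (by linear_combination -h2 - h)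

set_option maxHeartbeats 1000000 in
/-- The Demazure operators `∂_r` on `Pol_n = k[X_1,...,X_n]` (characterized by
`(X_r - X_{r+1}) · ∂_r P = P - s_r P`) satisfy the braid relations
`∂_r ∂_{r+1} ∂_r = ∂_{r+1} ∂_r ∂_{r+1}` and commute when `|r - t| > 1`. -/
theorem stmt_1 (k : Type) [Field k] (n : ℕ)
    (D : ∀ r : ℕ, r + 1 < n → (MvPolynomial (Fin n) k →ₗ[k] MvPolynomial (Fin n) k))
    (hD : ∀ (r : ℕ) (hr : r + 1 < n) (P : MvPolynomial (Fin n) k),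
      (X (⟨r, Nat.lt_of_succ_lt hr⟩ : Fin n) - X (⟨r + 1, hr⟩ : Fin n)) * D r hr P =
        P - rename (⇑(Equiv.swap (⟨r, Nat.lt_of_succ_lt hr⟩ : Fin n)
            (⟨r + 1, hr⟩ : Fin n))) P) :
    (∀ (r : ℕ) (hr : r + 2 < n) (P : MvPolynomial (Fin n) k),
      D r (Nat.lt_of_succ_lt hr) (D (r + 1) hr (D r (Nat.lt_of_succ_lt hr) P)) =
        D (r + 1) hr (D r (Nat.lt_of_succ_lt hr) (D (r + 1) hr P))) ∧
    (∀ (r t : ℕ) (hr : r + 1 < n) (ht : t + 1 < n), (r + 1 < t ∨ t + 1 < r) →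
      ∀ P : MvPolynomial (Fin n) k, D r hr (D t ht P) = D t ht (D r hr P)) := by
  constructor
  · -- braid relation
    intro r hr P
    set i : Fin n := ⟨r, by omega⟩ with hi
    set j : Fin n := ⟨r + 1, by omega⟩ with hj
    set l : Fin n := ⟨r + 2, hr⟩ with hl
    have hij : i ≠ j := by simp only [hi, hj, ne_eq, Fin.mk.injEq]; omega
    have hjl : j ≠ l := by simp only [hj, hl, ne_eq, Fin.mk.injEq]; omega
    have hil : i ≠ l := by simp only [hi, hl, ne_eq, Fin.mk.injEq]; omega
    set s := Equiv.swap i j with hs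
    set t := Equiv.swap j l with ht
    have hsi : s i = j := Equiv.swap_apply_left i j
    have hsj : s j = i := Equiv.swap_apply_right i j
    have hsl : s l = l := Equiv.swap_apply_of_ne_of_ne hil.symm hjl.symm
    have hti : t i = i := Equiv.swap_apply_of_ne_of_ne hij hil
    have htj : t j = l := Equiv.swap_apply_left j l
    have htl : t l = j := Equiv.swap_apply_right j l
    set R := D r (Nat.lt_of_succ_lt hr) P with hR
    set Q := D (r + 1) hr R with hQ
    set L := D r (Nat.lt_of_succ_lt hr) Q with hLdef
    set R' := D (r + 1) hr P with hR'
    set Q' := D r (Nat.lt_of_succ_lt hr) R' with hQ'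
    set L' := D (r + 1) hr Q' with hL'def
    have e1 : (X i - X j) * R = P - rename (⇑s) P := hD r (Nat.lt_of_succ_lt hr) P
    have e2 : (X j - X l) * Q = R - rename (⇑t) R := hD (r + 1) hr R
    have e3 : (X i - X j) * L = Q - rename (⇑s) Q := hD r (Nat.lt_of_succ_lt hr) Q
    have e1' : (X j - X l) * R' = P - rename (⇑t) P := hD (r + 1) hr P
    have e2' : (X i - X j) * Q' = R' - rename (⇑s) R' := hD r (Nat.lt_of_succ_lt hr) R'
    have e3' : (X j - X l) * L' = Q' - rename (⇑t) Q' := hD (r + 1) hr Q'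
    have sR : rename (⇑s) R = R := swap_inv hij e1
    have tR' : rename (⇑t) R' = R' := swap_inv hjl e1'
    -- apply t to e1 : t(Xi - Xj) = Xi - Xl
    have te1 : (X i - X l) * rename (⇑t) R = rename (⇑t) P - rename (⇑t) (rename (⇑s) P) := by
      have h2 := congrArg (rename (⇑t)) e1
      simpa only [map_mul, map_sub, rename_X, hti, htj] using h2
    -- apply s to e2 : s(Xj - Xl) = Xi - Xl
    have se2 : (X i - X l) * rename (⇑s) Q = rename (⇑s) R - rename (⇑s) (rename (⇑t) R) := by
      have h2 := congrArg (rename (⇑s)) e2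
      simpa only [map_mul, map_sub, rename_X, hsj, hsl] using h2
    -- apply s to te1 : s(Xi - Xl) = Xj - Xl
    have ste1 : (X j - X l) * rename (⇑s) (rename (⇑t) R) =
        rename (⇑s) (rename (⇑t) P) - rename (⇑s) (rename (⇑t) (rename (⇑s) P)) := by
      have h2 := congrArg (rename (⇑s)) te1
      simpa only [map_mul, map_sub, rename_X, hsi, hsl] using h2
    -- apply t to e2'
    have te2' : (X i - X l) * rename (⇑t) Q' = rename (⇑t) R' - rename (⇑t) (rename (⇑s) R') := by
      have h2 := congrArg (rename (⇑t)) e2'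
      simpa only [map_mul, map_sub, rename_X, hti, htj] using h2
    -- apply s to e1'
    have se1' : (X i - X l) * rename (⇑s) R' = rename (⇑s) P - rename (⇑s) (rename (⇑t) P) := by
      have h2 := congrArg (rename (⇑s)) e1'
      simpa only [map_mul, map_sub, rename_X, hsj, hsl] using h2
    -- apply t to se1'
    have tse1' : (X i - X j) * rename (⇑t) (rename (⇑s) R') =
        rename (⇑t) (rename (⇑s) P) - rename (⇑t) (rename (⇑s) (rename (⇑t) P)) := by
      have h2 := congrArg (rename (⇑t)) se1'
      simpa only [map_mul, map_sub, rename_X, hti, htl] using h2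
    have hb' : s * t * s = t * s * t := by
      have h1 : t * s * t = Equiv.swap l i := Equiv.swap_mul_swap_mul_swap hij hil
      have h2 : Equiv.swap j i * Equiv.swap l j * Equiv.swap j i = Equiv.swap i l :=
        Equiv.swap_mul_swap_mul_swap hjl.symm hil.symm
      rw [Equiv.swap_comm j i, Equiv.swap_comm l j, ← hs, ← ht] at h2
      rw [h1, h2, Equiv.swap_comm]
    have hb : ((⇑s) ∘ (⇑t)) ∘ (⇑s) = ((⇑t) ∘ (⇑s)) ∘ (⇑t) := by
      rw [← Equiv.Perm.coe_mul, ← Equiv.Perm.coe_mul, ← Equiv.Perm.coe_mul,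
        ← Equiv.Perm.coe_mul, hb']
    have braidP : rename (⇑s) (rename (⇑t) (rename (⇑s) P)) =
        rename (⇑t) (rename (⇑s) (rename (⇑t) P)) := by
      rw [rename_rename, rename_rename, rename_rename, rename_rename, hb]
    have hM : (X i - X j) * (X i - X l) * (X j - X l) ≠ (0 : MvPolynomial (Fin n) k) :=
      mul_ne_zero (mul_ne_zero (X_sub_X_ne hij) (X_sub_X_ne hil)) (X_sub_X_ne hjl)
    refine mul_left_cancel₀ hM ?_
    linear_combination (X i - X l) * (X j - X l) * e3 + (X i - X l) * e2 -
      (X j - X l) * se2 - (X j - X l) * sR + e1 - te1 + ste1 -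
      (X i - X j) * (X i - X l) * e3' - (X i - X l) * e2' + (X i - X j) * te2' +
      (X i - X j) * tR' - e1' + se1' - tse1' - braidP
  · -- commutation
    intro r t hr ht hrt P
    set i : Fin n := ⟨r, by omega⟩ with hi
    set j : Fin n := ⟨r + 1, hr⟩ with hj
    set u : Fin n := ⟨t, by omega⟩ with hu
    set v : Fin n := ⟨t + 1, ht⟩ with hv
    have hij : i ≠ j := by simp only [hi, hj, ne_eq, Fin.mk.injEq]; omega
    have huv : u ≠ v := by simp only [hu, hv, ne_eq, Fin.mk.injEq]; omega
    have hiu : i ≠ u := by simp only [hi, hu, ne_eq, Fin.mk.injEq]; omega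
    have hiv : i ≠ v := by simp only [hi, hv, ne_eq, Fin.mk.injEq]; omega
    have hju : j ≠ u := by simp only [hj, hu, ne_eq, Fin.mk.injEq]; omega
    have hjv : j ≠ v := by simp only [hj, hv, ne_eq, Fin.mk.injEq]; omega
    set s := Equiv.swap i j with hs
    set τ := Equiv.swap u v with hτ
    have hsu : s u = u := Equiv.swap_apply_of_ne_of_ne hiu.symm hju.symm
    have hsv : s v = v := Equiv.swap_apply_of_ne_of_ne hiv.symm hjv.symm
    have hτi : τ i = i := Equiv.swap_apply_of_ne_of_ne hiu hiv
    have hτj : τ j = j := Equiv.swap_apply_of_ne_of_ne hju hjv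
    set R := D t ht P with hR
    set L := D r hr R with hL
    set R' := D r hr P with hR'
    set L' := D t ht R' with hL'
    have f1 : (X u - X v) * R = P - rename (⇑τ) P := hD t ht P
    have f3 : (X i - X j) * L = R - rename (⇑s) R := hD r hr R
    have f1' : (X i - X j) * R' = P - rename (⇑s) P := hD r hr P
    have f3' : (X u - X v) * L' = R' - rename (⇑τ) R' := hD t ht R'
    have sf1 : (X u - X v) * rename (⇑s) R = rename (⇑s) P - rename (⇑s) (rename (⇑τ) P) := by
      have h2 := congrArg (rename (⇑s)) f1
      simpa only [map_mul, map_sub, rename_X, hsu, hsv] using h2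
    have tf1' : (X i - X j) * rename (⇑τ) R' = rename (⇑τ) P - rename (⇑τ) (rename (⇑s) P) := by
      have h2 := congrArg (rename (⇑τ)) f1'
      simpa only [map_mul, map_sub, rename_X, hτi, hτj] using h2
    have hc' : s * τ = τ * s := by
      have h1 := Equiv.swap_apply_apply τ i j
      rw [hτi, hτj, ← hs] at h1
      calc s * τ = (τ * s * τ⁻¹) * τ := by rw [← h1]
        _ = τ * s := by group
    have hc : (⇑s) ∘ (⇑τ) = (⇑τ) ∘ (⇑s) := by
      rw [← Equiv.Perm.coe_mul, ← Equiv.Perm.coe_mul, hc']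
    have commP : rename (⇑s) (rename (⇑τ) P) = rename (⇑τ) (rename (⇑s) P) := by
      rw [rename_rename, rename_rename, hc]
    have hM : (X i - X j) * (X u - X v) ≠ (0 : MvPolynomial (Fin n) k) :=
      mul_ne_zero (X_sub_X_ne hij) (X_sub_X_ne huv)
    refine mul_left_cancel₀ hM ?_
    linear_combination (X u - X v) * f3 + f1 - sf1 - (X i - X j) * f3' - f1' + tf1' + commP
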